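/- Let $(\hat\mu,\hat{\text{sgn}})$ be a reference pair and $P(\hat\mu,\hat{\text{sgn}})$ its set of allowable permutations. Then the union over $\rho \in P(\hat\mu,\hat{\text{sgn}})$ of the sets $\{(t_1,\ldots,t_{2k+1}) : t_{\rho^{-1}(2j)+1} \ge t_{\rho^{-1}(2l)+1} \text{ whenever } \hat\mu(2j)=\hat\mu(2l),\ 2j<2l\}$ equals $\{(t_1,\ldots,t_{2k+1}) : t_{2j+1} \ge t_{2l+1} \text{ whenever } 2j<2l,\ \hat\mu(2l)=\hat\mu(2j),\ \hat{\text{sgn}}(2j)=\hat{\text{sgn}}(2l)\}$. -/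
import Mathlib


/-- A collapsing map: `μ(2) = 1` and `1 ≤ μ(2j) < 2j` for all `1 ≤ j ≤ k`. -/
def IsCollapsing (k : ℕ) (μ : ℕ → ℕ) : Prop :=
  μ 2 = 1 ∧ ∀ j, 1 ≤ j → j ≤ k → 1 ≤ μ (2*j) ∧ μ (2*j) < 2*j

/-- `l` is an index of the domain `{2,4,…,2k}` (node `2l`). -/
def InDom (k l : ℕ) : Prop := 1 ≤ l ∧ l ≤ k

/-- Extension of a collapsing map to odd arguments: `μ(2l+1) := μ(2l)`. -/
def extMap (μ : ℕ → ℕ) : ℕ → ℕ :=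
  fun n => if n % 2 = 0 then μ n else μ (n - 1)

/-- Extension of a sign function (`true` = `+`) to odd arguments. -/
def extSgn (sgn : ℕ → Bool) : ℕ → Bool :=
  fun n => if n % 2 = 0 then sgn n else sgn (n - 1)

/-- The tier value `t(n)`: the least `q` with `μ^q(n) = 1`. -/
noncomputable def tier (μ : ℕ → ℕ) (n : ℕ) : ℕ :=
  sInf {q | (extMap μ)^[q] n = 1}

/-- A signed collapsing pair `(μ, sgn)` is tamed. -/
def Tamed (k : ℕ) (μ : ℕ → ℕ) (sgn : ℕ → Bool) : Prop :=
  (∀ l r, InDom k l → InDom k r →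
      tier μ (2*l) < tier μ (2*r) → 2*l < 2*r) ∧
  (∀ l r, InDom k l → InDom k r → tier μ (2*l) = tier μ (2*r) →
      extMap μ (extMap μ (2*l)) = extMap μ (extMap μ (2*r)) →
      extSgn sgn (μ (2*l)) = extSgn sgn (μ (2*r)) →
      μ (2*l) < μ (2*r) → 2*l < 2*r) ∧
  (∀ l r, InDom k l → InDom k r → tier μ (2*l) = tier μ (2*r) →
      extMap μ (extMap μ (2*l)) = extMap μ (extMap μ (2*r)) →
      extSgn sgn (μ (2*l)) = true → extSgn sgn (μ (2*r)) = false → 2*l < 2*r) ∧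
  (∀ l r, InDom k l → InDom k r → tier μ (2*l) = tier μ (2*r) →
      extMap μ (extMap μ (2*l)) ≠ extMap μ (extMap μ (2*r)) →
      μ (2*l) < μ (2*r) → 2*l < 2*r)

/-- A permutation of `ℕ` extending a permutation of `{2,4,…,2k}` by
`ρ(2l+1) = ρ(2l)+1`, fixing everything else. -/
def ExtPerm (k : ℕ) (ρ : Equiv.Perm ℕ) : Prop :=
  (∀ n, (∀ l, InDom k l → n ≠ 2*l ∧ n ≠ 2*l + 1) → ρ n = n) ∧
  (∀ l, InDom k l → (∃ m, InDom k m ∧ ρ (2*l) = 2*m) ∧ ρ (2*l + 1) = ρ (2*l) + 1)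

/-- `ρ` is allowable with respect to `(μ, sgn)`. -/
def Allowable (k : ℕ) (μ : ℕ → ℕ) (sgn : ℕ → Bool) (ρ : Equiv.Perm ℕ) : Prop :=
  ExtPerm k ρ ∧
  (∀ l, InDom k l → μ (ρ (2*l)) = μ (2*l)) ∧
  (∀ l r, InDom k l → InDom k r → l < r → μ (2*l) = μ (2*r) →
    sgn (2*l) = sgn (2*r) → ρ (2*l) < ρ (2*r))

/-- A reference pair: tamed and, in every fiber of `μ` (left branch), all `+`
nodes come before all `−` nodes. -/
def IsReference (k : ℕ) (μ : ℕ → ℕ) (sgn : ℕ → Bool) : Prop :=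
  Tamed k μ sgn ∧
  ∀ l r, InDom k l → InDom k r → l < r → μ (2*l) = μ (2*r) →
    sgn (2*r) = true → sgn (2*l) = true


noncomputable section Stmt12Aux

variable (k : ℕ) (μ : ℕ → ℕ) (t : ℕ → ℝ)

def fib (c : ℕ) : Finset ℕ := (Finset.Icc 1 k).filter (fun m => μ (2*m) = c)

lemma mem_fib {c l : ℕ} : l ∈ fib k μ c ↔ (1 ≤ l ∧ l ≤ k) ∧ μ (2*l) = c := by
  simp [fib, Finset.mem_filter, Finset.mem_Icc, and_assoc]

def fe (c : ℕ) : Fin (fib k μ c).card ≃o (fib k μ c) := (fib k μ c).orderIsoOfFin rfl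

def fkey (c : ℕ) : Fin (fib k μ c).card → ℝ := fun i => -(t (2*((fe k μ c i : ℕ)) + 1))

def fperm (c : ℕ) : Equiv.Perm (Fin (fib k μ c).card) := Tuple.sort (fkey k μ t c)

def sigAux (c l : ℕ) : ℕ :=
  if h : l ∈ fib k μ c then ((fe k μ c) ((fperm k μ t c) ((fe k μ c).symm ⟨l, h⟩)) : ℕ) else l

def tauAux (c l : ℕ) : ℕ :=
  if h : l ∈ fib k μ c then ((fe k μ c) ((fperm k μ t c).symm ((fe k μ c).symm ⟨l, h⟩)) : ℕ) else l

lemma sigAux_mem {c l : ℕ} (h : l ∈ fib k μ c) : sigAux k μ t c l ∈ fib k μ c := by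
  rw [sigAux, dif_pos h]; exact ((fe k μ c) _).2

lemma tauAux_mem {c l : ℕ} (h : l ∈ fib k μ c) : tauAux k μ t c l ∈ fib k μ c := by
  rw [tauAux, dif_pos h]; exact ((fe k μ c) _).2

lemma tauAux_sigAux (c l : ℕ) : tauAux k μ t c (sigAux k μ t c l) = l := by
  by_cases h : l ∈ fib k μ c
  · have hm := sigAux_mem k μ t h
    rw [tauAux, dif_pos hm]
    have : (⟨sigAux k μ t c l, hm⟩ : fib k μ c)
        = (fe k μ c) ((fperm k μ t c) ((fe k μ c).symm ⟨l, h⟩)) := by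
      apply Subtype.ext; simp only [sigAux, dif_pos h]
    rw [this]; simp
  · rw [sigAux, dif_neg h, tauAux, dif_neg h]

lemma sigAux_tauAux (c l : ℕ) : sigAux k μ t c (tauAux k μ t c l) = l := by
  by_cases h : l ∈ fib k μ c
  · have hm := tauAux_mem k μ t h
    rw [sigAux, dif_pos hm]
    have : (⟨tauAux k μ t c l, hm⟩ : fib k μ c)
        = (fe k μ c) ((fperm k μ t c).symm ((fe k μ c).symm ⟨l, h⟩)) := by
      apply Subtype.ext; simp only [tauAux, dif_pos h]
    rw [this]; simp
  · rw [tauAux, dif_neg h, sigAux, dif_neg h]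

/-- `t(2·sigAux(·)+1)` is antitone along each fiber. -/
lemma sigAux_antitone {c j l : ℕ} (hj : j ∈ fib k μ c) (hl : l ∈ fib k μ c) (hjl : j < l) :
    t (2 * sigAux k μ t c l + 1) ≤ t (2 * sigAux k μ t c j + 1) := by
  simp only [sigAux, dif_pos hj, dif_pos hl]
  have hab : (fe k μ c).symm ⟨j, hj⟩ < (fe k μ c).symm ⟨l, hl⟩ := by
    rw [OrderIso.lt_iff_lt]; exact Subtype.mk_lt_mk.mpr hjl
  have := Tuple.monotone_sort (fkey k μ t c) hab.le
  simpa [fkey, fperm] using this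

/-- Stability: the inverse sort is monotone on pairs already correctly ordered. -/
lemma tauAux_mono {c j l : ℕ} (hj : j ∈ fib k μ c) (hl : l ∈ fib k μ c) (hjl : j < l)
    (ht : t (2*l + 1) ≤ t (2*j + 1)) :
    tauAux k μ t c j < tauAux k μ t c l := by
  simp only [tauAux, dif_pos hj, dif_pos hl]
  set a : Fin (fib k μ c).card := (fe k μ c).symm ⟨j, hj⟩ with ha
  set b : Fin (fib k μ c).card := (fe k μ c).symm ⟨l, hl⟩ with hb
  have hab : a < b := by
    rw [ha, hb, OrderIso.lt_iff_lt]; exact Subtype.mk_lt_mk.mpr hjl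
  set a' := (fperm k μ t c).symm a with ha'
  set b' := (fperm k μ t c).symm b with hb'
  have hkey : fkey k μ t c a ≤ fkey k μ t c b := by
    have hja : ((fe k μ c a : ℕ)) = j := by rw [ha]; simp
    have hlb : ((fe k μ c b : ℕ)) = l := by rw [hb]; simp
    simp only [fkey, hja, hlb]
    exact neg_le_neg ht
  have hne : a' ≠ b' := by
    intro h; apply hab.ne; rw [ha', hb'] at h; exact (fperm k μ t c).symm.injective h
  have ha'b' : a' < b' := by
    rcases lt_or_gt_of_ne hne with h | h
    · exact h
    · exfalso
      have hpa : (fperm k μ t c) a' = a := by rw [ha']; exact (fperm k μ t c).apply_symm_apply a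
      have hpb : (fperm k μ t c) b' = b := by rw [hb']; exact (fperm k μ t c).apply_symm_apply b
      have hmono := Tuple.monotone_sort (fkey k μ t c) h.le
      have hmono' : fkey k μ t c b ≤ fkey k μ t c a := by
        rw [← hpa, ← hpb]; exact hmono
      have heq : fkey k μ t c ((Tuple.sort (fkey k μ t c)) b')
          = fkey k μ t c ((Tuple.sort (fkey k μ t c)) a') := by
        have h2 : fkey k μ t c a = fkey k μ t c b := le_antisymm hkey hmono'
        rw [show ((Tuple.sort (fkey k μ t c)) b' : Fin _) = b from hpb,
            show ((Tuple.sort (fkey k μ t c)) a' : Fin _) = a from hpa, h2]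
      have hst := ((Tuple.eq_sort_iff (f := fkey k μ t c)
        (σ := Tuple.sort (fkey k μ t c))).mp rfl).2 b' a' h heq
      have hba : b < a := by rw [← hpa, ← hpb]; exact hst
      exact absurd hba hab.not_gt
  calc ((fe k μ c a' : ℕ)) < (fe k μ c b' : ℕ) := by
        exact Subtype.mk_lt_mk.mp ((fe k μ c).lt_iff_lt.mpr ha'b')
    _ = _ := rfl

def sig (l : ℕ) : ℕ := sigAux k μ t (μ (2*l)) l
def tau (l : ℕ) : ℕ := tauAux k μ t (μ (2*l)) l

lemma mem_fib_self {l : ℕ} (h : 1 ≤ l ∧ l ≤ k) : l ∈ fib k μ (μ (2*l)) :=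
  (mem_fib k μ).mpr ⟨h, rfl⟩

lemma sig_fiber {l : ℕ} (h : 1 ≤ l ∧ l ≤ k) :
    μ (2 * sig k μ t l) = μ (2*l) ∧ 1 ≤ sig k μ t l ∧ sig k μ t l ≤ k := by
  have := (mem_fib k μ).mp (sigAux_mem k μ t (c := μ (2*l)) (mem_fib_self k μ h))
  exact ⟨this.2, this.1⟩

lemma tau_fiber {l : ℕ} (h : 1 ≤ l ∧ l ≤ k) :
    μ (2 * tau k μ t l) = μ (2*l) ∧ 1 ≤ tau k μ t l ∧ tau k μ t l ≤ k := by
  have := (mem_fib k μ).mp (tauAux_mem k μ t (c := μ (2*l)) (mem_fib_self k μ h))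
  exact ⟨this.2, this.1⟩

lemma sig_fix {l : ℕ} (h : ¬ (1 ≤ l ∧ l ≤ k)) : sig k μ t l = l := by
  rw [sig, sigAux, dif_neg]; intro hm; exact h ((mem_fib k μ).mp hm).1

lemma tau_fix {l : ℕ} (h : ¬ (1 ≤ l ∧ l ≤ k)) : tau k μ t l = l := by
  rw [tau, tauAux, dif_neg]; intro hm; exact h ((mem_fib k μ).mp hm).1

lemma tau_sig (l : ℕ) : tau k μ t (sig k μ t l) = l := by
  by_cases h : 1 ≤ l ∧ l ≤ k
  · have hf := (sig_fiber k μ t h).1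
    rw [tau, hf, sig]; exact tauAux_sigAux k μ t _ l
  · rw [sig_fix k μ t h, tau_fix k μ t h]

lemma sig_tau (l : ℕ) : sig k μ t (tau k μ t l) = l := by
  by_cases h : 1 ≤ l ∧ l ≤ k
  · have hf := (tau_fiber k μ t h).1
    rw [sig, hf, tau]; exact sigAux_tauAux k μ t _ l
  · rw [tau_fix k μ t h, sig_fix k μ t h]

def rho : Equiv.Perm ℕ where
  toFun n := if n % 2 = 0 then 2 * tau k μ t (n/2) else 2 * tau k μ t (n/2) + 1
  invFun n := if n % 2 = 0 then 2 * sig k μ t (n/2) else 2 * sig k μ t (n/2) + 1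
  left_inv n := by
    by_cases h : n % 2 = 0
    · simp only [h, if_pos, if_true]
      rw [if_pos (by omega), Nat.mul_div_cancel_left _ (by norm_num : 0 < 2), sig_tau]
      omega
    · simp only [h, if_neg, if_false]
      rw [if_neg (by omega)]
      rw [show (2 * tau k μ t (n/2) + 1) / 2 = tau k μ t (n/2) by omega, sig_tau]
      omega
  right_inv n := by
    by_cases h : n % 2 = 0
    · simp only [h, if_pos, if_true]
      rw [if_pos (by omega), Nat.mul_div_cancel_left _ (by norm_num : 0 < 2), tau_sig]
      omega
    · simp only [h, if_neg, if_false]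
      rw [if_neg (by omega)]
      rw [show (2 * sig k μ t (n/2) + 1) / 2 = sig k μ t (n/2) by omega, tau_sig]
      omega

lemma rho_even (l : ℕ) : rho k μ t (2*l) = 2 * tau k μ t l := by
  show (if (2*l) % 2 = 0 then _ else _) = _
  rw [if_pos (by omega), Nat.mul_div_cancel_left _ (by norm_num : 0 < 2)]

lemma rho_odd (l : ℕ) : rho k μ t (2*l+1) = 2 * tau k μ t l + 1 := by
  show (if (2*l+1) % 2 = 0 then _ else _) = _
  rw [if_neg (by omega), show (2*l+1)/2 = l by omega]

lemma rho_symm_even (l : ℕ) : (rho k μ t).symm (2*l) = 2 * sig k μ t l := by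
  show (if (2*l) % 2 = 0 then _ else _) = _
  rw [if_pos (by omega), Nat.mul_div_cancel_left _ (by norm_num : 0 < 2)]

end Stmt12Aux

/-- For a reference pair `(μ̂, ŝgn)`, the union over allowable
permutations `ρ` of the time-ordering regions
`{t : t_{ρ⁻¹(2j)+1} ≥ t_{ρ⁻¹(2l)+1} whenever μ̂(2j) = μ̂(2l), 2j < 2l}`
equals the region
`{t : t_{2j+1} ≥ t_{2l+1} whenever 2j < 2l, μ̂(2l) = μ̂(2j), ŝgn(2j) = ŝgn(2l)}`. -/

theorem stmt_12 (k : ℕ) (μ : ℕ → ℕ) (sgn : ℕ → Bool)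
    (hμ : IsCollapsing k μ) (href : IsReference k μ sgn) :
    (⋃ ρ : {ρ : Equiv.Perm ℕ // Allowable k μ sgn ρ},
      {t : ℕ → ℝ | ∀ j l, InDom k j → InDom k l → 2*j < 2*l →
        μ (2*j) = μ (2*l) →
          t ((ρ : Equiv.Perm ℕ).symm (2*l) + 1) ≤ t ((ρ : Equiv.Perm ℕ).symm (2*j) + 1)}) =
    {t : ℕ → ℝ | ∀ j l, InDom k j → InDom k l → 2*j < 2*l →
      μ (2*l) = μ (2*j) → sgn (2*j) = sgn (2*l) → t (2*l + 1) ≤ t (2*j + 1)} := by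
  ext t
  simp only [Set.mem_iUnion, Set.mem_setOf_eq]
  constructor
  · rintro ⟨⟨ρ, hext, hfib, hmono⟩, hmem⟩ j l hj hl hjl hμe hsgn
    obtain ⟨⟨m, hm, hρj⟩, -⟩ := hext.2 j hj
    obtain ⟨⟨m', hm', hρl⟩, -⟩ := hext.2 l hl
    have hjl' : j < l := by omega
    have hlt : ρ (2*j) < ρ (2*l) := hmono j l hj hl hjl' hμe.symm hsgn
    rw [hρj, hρl] at hlt
    have hμm : μ (2*m) = μ (2*m') := by
      rw [← hρj, ← hρl, hfib j hj, hfib l hl]; exact hμe.symm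
    have hres := hmem m m' hm hm' hlt hμm
    rwa [← hρj, ← hρl, Equiv.symm_apply_apply, Equiv.symm_apply_apply] at hres
  · intro ht
    have hallow : Allowable k μ sgn (rho k μ t) := by
      refine ⟨⟨?_, ?_⟩, ?_, ?_⟩
      · intro n hn
        by_cases he : n % 2 = 0
        · have h2 : n = 2 * (n/2) := by omega
          have hnd : ¬ (1 ≤ n/2 ∧ n/2 ≤ k) := by
            intro hd
            exact (hn (n/2) hd).1 h2
          rw [h2, rho_even, tau_fix k μ t hnd]
        · have h2 : n = 2 * (n/2) + 1 := by omega
          have hnd : ¬ (1 ≤ n/2 ∧ n/2 ≤ k) := by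
            intro hd
            exact (hn (n/2) hd).2 h2
          rw [h2, rho_odd, tau_fix k μ t hnd]
      · intro l hl
        obtain ⟨-, h1, h2⟩ := tau_fiber k μ t hl
        exact ⟨⟨tau k μ t l, ⟨h1, h2⟩, rho_even k μ t l⟩, by rw [rho_odd, rho_even]⟩
      · intro l hl
        rw [rho_even]
        exact (tau_fiber k μ t hl).1
      · intro l r hl hr hlr hμe hsgn
        rw [rho_even, rho_even]
        have hlf : l ∈ fib k μ (μ (2*l)) := mem_fib_self k μ hl
        have hrf : r ∈ fib k μ (μ (2*l)) := (mem_fib k μ).mpr ⟨hr, hμe.symm⟩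
        have htlr : t (2*r + 1) ≤ t (2*l + 1) :=
          ht l r hl hr (by omega) hμe.symm hsgn
        have := tauAux_mono k μ t hlf hrf hlr htlr
        rw [tau, tau, ← hμe] at *
        omega
    refine ⟨⟨rho k μ t, hallow⟩, ?_⟩
    intro j l hj hl hjl hμe
    have hjl' : j < l := by omega
    rw [rho_symm_even, rho_symm_even]
    have hjf : j ∈ fib k μ (μ (2*j)) := mem_fib_self k μ hj
    have hlf : l ∈ fib k μ (μ (2*j)) := (mem_fib k μ).mpr ⟨hl, hμe.symm⟩
    have := sigAux_antitone k μ t hjf hlf hjl'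
    rw [sig, sig, show μ (2*l) = μ (2*j) from hμe.symm]
    exact this
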